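/- Let s₀ ≥ 1, let X be uniformly distributed on {0,1}^p with p ≥ s₀, and let m(X) = β·(1{Σ_{j=1}^{s₀} X_j is odd} − 1{Σ_{j=1}^{s₀} X_j is even}) for some β ∈ R. For any region t that is an intersection of halfspaces with P(X ∈ t) > 0, there exists a split (w,c) with ‖w‖₂ = 1, ‖w‖₀ ≤ s₀ such that E[Var(m(X) | 1_{X∈t}, 1_{w·X>c}) 1_{X∈t}] ≤ (1 − 2^{−s₀}) · E[Var(m(X) | 1_{X∈t}) 1_{X∈t}]. -/

import Mathlib

open MeasureTheory

/-- Conditional mean of `Y` on the event `S` (node mean). -/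
noncomputable def condMeanOn {Ω : Type*} [MeasurableSpace Ω] (μ : Measure Ω)
    (Y : Ω → ℝ) (S : Set Ω) : ℝ :=
  (∫ ω in S, Y ω ∂μ) / (μ S).toReal

/-- Conditional variance of `Y` on the event `S` (node variance). -/
noncomputable def condVarOn {Ω : Type*} [MeasurableSpace Ω] (μ : Measure Ω)
    (Y : Ω → ℝ) (S : Set Ω) : ℝ :=
  (∫ ω in S, (Y ω - condMeanOn μ Y S) ^ 2 ∂μ) / (μ S).toReal

/-! ### Auxiliary material -/

open Finset

section Aux

/-- The vertex embedding of the Boolean hypercube. -/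
def eB (p : ℕ) (v : Fin p → Bool) : Fin p → ℝ := fun i => if v i then 1 else 0

/-- Number of active ones among the first `s₀` coordinates. -/
def cntB (p s₀ : ℕ) (v : Fin p → Bool) : ℕ :=
  (Finset.univ.filter fun j : Fin p => j.val < s₀ ∧ v j = true).card

/-- The pattern of `v` on the first `s₀` coordinates. -/
def patB (p s₀ : ℕ) (v : Fin p → Bool) : Fin p → Bool :=
  fun i => if i.val < s₀ then v i else false

/-- The split direction isolating the pattern `z`. -/
noncomputable def wS (p s₀ : ℕ) (z : Fin p → Bool) : Fin p → ℝ :=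
  fun i => if i.val < s₀ then (if z i then (1:ℝ) else -1) / Real.sqrt s₀ else 0

/-- The split threshold isolating the pattern `z`. -/
noncomputable def cS (p s₀ : ℕ) (z : Fin p → Bool) : ℝ :=
  (((Finset.univ.filter fun i : Fin p => i.val < s₀ ∧ z i = true).card : ℝ) - 1/2)
    / Real.sqrt s₀

/-- The Boolean vertices of a region. -/
noncomputable def FS (p : ℕ) (S : Set (Fin p → ℝ)) : Finset (Fin p → Bool) :=
  @Finset.filter _ (fun v => eB p v ∈ S) (fun v => Classical.propDecidable _) Finset.univ

/-- Odd-parity vertices of a region. -/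
noncomputable def nO (p s₀ : ℕ) (S : Set (Fin p → ℝ)) : ℕ :=
  ((FS p S).filter fun v => Odd (cntB p s₀ v)).card

/-- Even-parity vertices of a region. -/
noncomputable def nE (p s₀ : ℕ) (S : Set (Fin p → ℝ)) : ℕ :=
  ((FS p S).filter fun v => ¬ Odd (cntB p s₀ v)).card

lemma core_ineq (s₀ : ℕ) (hs₀ : 1 ≤ s₀) (a b r : ℝ)
    (ha : 0 ≤ r) (hra : r ≤ a) (hab : a ≤ b)
    (hpig : a ≤ 2 ^ (s₀ - 1) * r) :
    4 * (a - r) * b / ((a - r) + b) ≤ (1 - (1/2 : ℝ) ^ s₀) * (4 * a * b / (a + b)) := by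
  rcases eq_or_lt_of_le (le_trans (le_trans ha hra) hab) with hb | hb
  · have hb0 : b = 0 := hb.symm
    have ha0 : a = 0 := le_antisymm (hb0 ▸ hab) (le_trans ha hra)
    have hr0 : r = 0 := le_antisymm (ha0 ▸ hra) ha
    simp [hb0, ha0, hr0]
  · set ε : ℝ := (1/2 : ℝ) ^ s₀ with hε
    have hεpos : 0 < ε := by positivity
    have hεhalf : 2 ^ (s₀ - 1) * ε = 1/2 := by
      rw [hε, div_pow, one_pow,
        show (2:ℝ)^s₀ = 2^(s₀-1) * 2 by rw [← pow_succ]; congr 1; omega]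
      field_simp
    have h1 : 0 < a - r + b := by linarith
    have h2 : 0 < a + b := by linarith
    have key : ε * a * (a - r + b) ≤ r * b := by
      have h3 : ε * a ≤ r / 2 := by
        calc ε * a ≤ ε * (2 ^ (s₀ - 1) * r) := by nlinarith
        _ = r / 2 := by rw [← mul_assoc, mul_comm ε, hεhalf]; ring
      calc ε * a * (a - r + b) ≤ (r/2) * (2*b) :=
            mul_le_mul h3 (by linarith) (by linarith) (by positivity)
      _ = r * b := by ring
    rw [mul_div_assoc' (1 - ε), div_le_div_iff₀ h1 h2]
    nlinarith [key, mul_pos hb h2, mul_nonneg (mul_nonneg ha hb.le) hb.le]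

lemma cntB_flip (p s₀ : ℕ) (hs₀ : 1 ≤ s₀) (hps : s₀ ≤ p) (z : Fin p → Bool) :
    Odd (cntB p s₀ (Function.update z ⟨0, lt_of_lt_of_le hs₀ hps⟩
      (!z ⟨0, lt_of_lt_of_le hs₀ hps⟩))) ↔ ¬ Odd (cntB p s₀ z) := by
  set i₀ : Fin p := ⟨0, lt_of_lt_of_le hs₀ hps⟩
  have hc : ∀ w : Fin p → Bool, cntB p s₀ w =
      (if (i₀.val < s₀ ∧ w i₀ = true) then 1 else 0) +
      ∑ j ∈ univ.erase i₀, (if (j.val < s₀ ∧ w j = true) then 1 else 0) := by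
    intro w
    rw [cntB, Finset.card_filter, ← Finset.add_sum_erase _ _ (mem_univ i₀)]
  rw [hc, hc z]
  have he : ∀ j ∈ univ.erase i₀,
      (if (j.val < s₀ ∧ (Function.update z i₀ (!z i₀)) j = true) then 1 else 0) =
      (if (j.val < s₀ ∧ z j = true) then 1 else 0) := by
    intro j hj
    rw [Function.update_of_ne (Finset.mem_erase.1 hj).1]
  rw [Finset.sum_congr rfl he]
  have hi₀ : i₀.val < s₀ := hs₀
  rw [Function.update_self]
  rcases Bool.eq_false_or_eq_true (z i₀) with h | h <;>
    simp [h, hi₀, Nat.odd_iff, Nat.add_mod, Nat.one_mod] <;> omega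

lemma card_parity_patterns (p s₀ : ℕ) (hs₀ : 1 ≤ s₀) (hps : s₀ ≤ p) (b : Bool) :
    (Finset.univ.filter (fun z : Fin p → Bool =>
      (∀ i : Fin p, s₀ ≤ i.val → z i = false) ∧ (Odd (cntB p s₀ z) ↔ b = true))).card
      ≤ 2 ^ (s₀ - 1) := by
  set i₀ : Fin p := ⟨0, lt_of_lt_of_le hs₀ hps⟩
  set flip : (Fin p → Bool) → (Fin p → Bool) := fun z => Function.update z i₀ (!z i₀) with hflip
  have hinv : Function.Involutive flip := by
    intro z
    funext i
    by_cases hi : i = i₀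
    · subst hi; simp [hflip]
    · simp [hflip, Function.update_of_ne hi]
  obtain ⟨P, hP⟩ : ∃ P : Bool → Finset (Fin p → Bool), P = fun c => Finset.univ.filter (fun z =>
      (∀ i : Fin p, s₀ ≤ i.val → z i = false) ∧ (Odd (cntB p s₀ z) ↔ c = true)) := ⟨_, rfl⟩
  rw [show (Finset.univ.filter (fun z : Fin p → Bool =>
      (∀ i : Fin p, s₀ ≤ i.val → z i = false) ∧ (Odd (cntB p s₀ z) ↔ b = true))) = P b by rw [hP]]
  have hmaps : ∀ c, ∀ z ∈ P c, flip z ∈ P (!c) := by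
    intro c z hz
    rw [hP, Finset.mem_filter] at hz ⊢
    obtain ⟨-, hsupp, hpar⟩ := hz
    refine ⟨mem_univ _, ?_, ?_⟩
    · intro i hi
      have : i ≠ i₀ := by
        intro h; subst h; exact absurd hi (by simp [i₀]; omega)
      rw [show flip z i = z i from Function.update_of_ne this _ _]
      exact hsupp i hi
    · rw [show flip z = Function.update z i₀ (!z i₀) from rfl,
        cntB_flip p s₀ hs₀ hps z]
      rcases c with _ | _ <;> simp_all
  have hcards : ∀ c, (P c).card ≤ (P (!c)).card := by
    intro c
    apply Finset.card_le_card_of_injOn flip (hmaps c)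
    exact fun x _ y _ h => hinv.injective h
  have hcard_eq : (P b).card = (P (!b)).card :=
    le_antisymm (hcards b) (by simpa using hcards (!b))
  have hdisj : Disjoint (P b) (P (!b)) := by
    rw [Finset.disjoint_left]
    intro z hz hz'
    rw [hP, Finset.mem_filter] at hz hz'
    rcases b with _ | _ <;> simp_all
  have hsub : P b ∪ P (!b) ⊆ Finset.univ.filter (fun z : Fin p → Bool =>
      ∀ i : Fin p, s₀ ≤ i.val → z i = false) := by
    intro z hz
    rw [Finset.mem_union] at hz
    rcases hz with hz | hz <;> rw [hP, Finset.mem_filter] at hz <;>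
      exact Finset.mem_filter.2 ⟨mem_univ _, hz.2.1⟩
  have hpatcard : (Finset.univ.filter (fun z : Fin p → Bool =>
      ∀ i : Fin p, s₀ ≤ i.val → z i = false)).card ≤ 2 ^ s₀ := by
    have : (Finset.univ.filter (fun z : Fin p → Bool =>
        ∀ i : Fin p, s₀ ≤ i.val → z i = false)).card =
        ((Finset.univ.filter (fun z : Fin p → Bool =>
        ∀ i : Fin p, s₀ ≤ i.val → z i = false)).image
          (fun z => (fun j : Fin s₀ => z (Fin.castLE hps j)))).card := by
      rw [Finset.card_image_of_injOn]
      intro x hx y hy hxy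
      rw [Finset.mem_coe, Finset.mem_filter] at hx hy
      funext i
      by_cases hi : i.val < s₀
      · have := congrFun hxy ⟨i.val, hi⟩
        simpa [Fin.castLE] using this
      · rw [hx.2 i (by omega), hy.2 i (by omega)]
    rw [this]
    refine le_trans (Finset.card_le_univ _) ?_
    simp
  have hle : (P b).card + (P (!b)).card ≤ 2 ^ s₀ :=
    le_trans (le_of_eq (Finset.card_union_of_disjoint hdisj).symm)
      (le_trans (Finset.card_le_card hsub) hpatcard)
  have h2 : 2 * (P b).card ≤ 2 * 2 ^ (s₀ - 1) := by
    rw [two_mul, two_mul]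
    calc (P b).card + (P b).card = (P b).card + (P (!b)).card := by rw [hcard_eq]
    _ ≤ 2 ^ s₀ := hle
    _ = 2 ^ (s₀ - 1) + 2 ^ (s₀ - 1) := by
        rw [← two_mul, ← pow_succ']
        congr 1
        exact (Nat.succ_pred_eq_of_pos hs₀).symm
  exact Nat.le_of_mul_le_mul_left h2 (by norm_num)

lemma eB_inj (p : ℕ) : Function.Injective (eB p) := by
  intro u v h
  funext i
  have := congrFun h i
  simp only [eB] at this
  rcases Bool.eq_false_or_eq_true (u i) with h1 | h1 <;>
    rcases Bool.eq_false_or_eq_true (v i) with h2 | h2 <;>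
    simp [h1, h2] at this ⊢

lemma mem_FS {p : ℕ} {S : Set (Fin p → ℝ)} {v : Fin p → Bool} :
    v ∈ FS p S ↔ eB p v ∈ S := by
  simp [FS]

lemma FS_mono {p : ℕ} {S T : Set (Fin p → ℝ)} (h : S ⊆ T) : FS p S ⊆ FS p T := by
  intro v hv
  exact mem_FS.2 (h (mem_FS.1 hv))

lemma cntB_match (p s₀ : ℕ) {v z : Fin p → Bool}
    (h : ∀ i : Fin p, i.val < s₀ → v i = z i) : cntB p s₀ v = cntB p s₀ z := by
  unfold cntB
  congr 1
  apply Finset.filter_congr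
  intro j _
  by_cases hj : j.val < s₀ <;> simp [hj]
  rw [h j hj]

lemma patB_supp (p s₀ : ℕ) (v : Fin p → Bool) :
    ∀ i : Fin p, s₀ ≤ i.val → patB p s₀ v i = false := by
  intro i hi
  simp only [patB, if_neg (not_lt.2 hi)]

lemma patB_match (p s₀ : ℕ) (v : Fin p → Bool) :
    ∀ i : Fin p, i.val < s₀ → v i = patB p s₀ v i := by
  intro i hi
  simp [patB, hi]

lemma pat_eq_iff (p s₀ : ℕ) {v z : Fin p → Bool}
    (hz : ∀ i : Fin p, s₀ ≤ i.val → z i = false) :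
    patB p s₀ v = z ↔ ∀ i : Fin p, i.val < s₀ → v i = z i := by
  constructor
  · intro h i hi
    rw [← h]
    exact patB_match p s₀ v i hi
  · intro h
    funext i
    by_cases hi : i.val < s₀
    · rw [show patB p s₀ v i = v i by simp [patB, hi], h i hi]
    · rw [patB_supp p s₀ v i (by omega), hz i (by omega)]

end Aux

section Measure

variable {p : ℕ} (μ : Measure (Fin p → ℝ)) [IsProbabilityMeasure μ]
  (hunif : ∀ v : Fin p → Bool,
      μ {(fun i => if v i then (1 : ℝ) else 0)} = ((2 : ENNReal) ^ p)⁻¹)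

include hunif

lemma mu_finset (s : Finset (Fin p → Bool)) :
    μ (↑(s.image (eB p))) = s.card * ((2 : ENNReal) ^ p)⁻¹ := by
  have hunif' : ∀ v : Fin p → Bool, μ {eB p v} = ((2 : ENNReal) ^ p)⁻¹ := hunif
  have : (↑(s.image (eB p)) : Set (Fin p → ℝ)) = ⋃ v ∈ s, {eB p v} := by
    ext x; simp; aesop
  rw [this, measure_biUnion_finset]
  · rw [Finset.sum_congr rfl (fun v _ => hunif' v), Finset.sum_const, nsmul_eq_mul]
  · intro u _ v _ huv
    simp only [Function.onFun, Set.disjoint_singleton]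
    exact fun h => huv (eB_inj p h)
  · exact fun v _ => measurableSet_singleton _

lemma mu_range_compl : μ (Set.range (eB p))ᶜ = 0 := by
  have h1 : Set.range (eB p) = ↑((Finset.univ : Finset (Fin p → Bool)).image (eB p)) := by
    ext x; simp
  have h2 : μ (Set.range (eB p)) = 1 := by
    rw [h1, mu_finset μ hunif]
    simp only [Finset.card_univ]
    rw [show Fintype.card (Fin p → Bool) = 2 ^ p by simp]
    push_cast
    rw [ENNReal.mul_inv_cancel (by positivity) (by simp)]
  rw [measure_compl (by rw [h1]; exact (Finset.finite_toSet _).measurableSet) (by simp),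
    measure_univ, h2, tsub_self]

lemma mu_eq (S : Set (Fin p → ℝ)) :
    μ S = ((FS p S).card : ENNReal) * ((2 : ENNReal) ^ p)⁻¹ := by
  have hsub : S \ ↑((FS p S).image (eB p)) ⊆ (Set.range (eB p))ᶜ := by
    intro x ⟨hxS, hx⟩
    intro ⟨v, hv⟩
    exact hx (by simp only [Finset.coe_image, Set.mem_image, Finset.mem_coe]
                 exact ⟨v, mem_FS.2 (hv ▸ hxS), hv⟩)
  have hle1 : μ S ≤ μ (↑((FS p S).image (eB p))) := by
    calc μ S ≤ μ (↑((FS p S).image (eB p))) + μ (S \ ↑((FS p S).image (eB p))) := by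
          refine le_trans (measure_mono ?_) (measure_union_le _ _)
          intro x hx
          by_cases h : x ∈ (↑((FS p S).image (eB p)) : Set (Fin p → ℝ))
          · exact Or.inl h
          · exact Or.inr ⟨hx, h⟩
    _ = μ (↑((FS p S).image (eB p))) := by
          rw [le_antisymm (le_trans (measure_mono hsub) (le_of_eq (mu_range_compl μ hunif)))
            zero_le, add_zero]
  have hle2 : μ (↑((FS p S).image (eB p))) ≤ μ S := by
    apply measure_mono
    intro x
    simp only [Finset.coe_image, Set.mem_image, Finset.mem_coe]
    rintro ⟨v, hv, rfl⟩
    exact mem_FS.1 hv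
  rw [le_antisymm hle1 hle2, mu_finset μ hunif]

lemma ae_eq_FS (S : Set (Fin p → ℝ)) :
    S =ᵐ[μ] (↑((FS p S).image (eB p)) : Set (Fin p → ℝ)) := by
  rw [Filter.eventuallyEq_set, MeasureTheory.ae_iff]
  refine measure_mono_null ?_ (mu_range_compl μ hunif)
  intro x hx
  intro ⟨v, hv⟩
  apply hx
  subst hv
  simp only [Finset.coe_image, Set.mem_image, Finset.mem_coe]
  constructor
  · intro h; exact ⟨v, mem_FS.2 h, rfl⟩
  · rintro ⟨u, hu, hequ⟩
    have := eB_inj p hequ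
    subst this
    exact mem_FS.1 hu

lemma integral_FS (S : Set (Fin p → ℝ)) (f : (Fin p → ℝ) → ℝ) :
    ∫ x in S, f x ∂μ = (∑ v ∈ FS p S, f (eB p v)) / 2 ^ p := by
  rw [setIntegral_congr_set (ae_eq_FS μ hunif S)]
  rw [integral_finset]
  · have hunif' : ∀ v : Fin p → Bool, μ {eB p v} = ((2 : ENNReal) ^ p)⁻¹ := hunif
    rw [Finset.sum_image (fun u _ v _ h => eB_inj p h), Finset.sum_div]
    refine Finset.sum_congr rfl (fun v _ => ?_)
    rw [measureReal_def, hunif', smul_eq_mul, ENNReal.toReal_inv]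
    rw [show ((2:ENNReal)^p).toReal = (2:ℝ)^p by simp]
    rw [div_eq_mul_inv, mul_comm]
  · refine (integrableOn_finset_iUnion (s := (FS p S).image (eB p))
      (t := fun x => {x})).2 (fun x _ => ?_) |>.mono_set ?_
    · exact (integrableOn_singleton_iff).mpr (Or.inr (measure_lt_top μ _))
    · intro x hx; simp only [Set.mem_iUnion]; exact ⟨x, hx, rfl⟩

variable {s₀ : ℕ} {β : ℝ} {m : (Fin p → ℝ) → ℝ}
  (hm : ∀ x, m x = β *
      ((if Odd ((Finset.univ.filter (fun j : Fin p => j.val < s₀ ∧ x j = 1)).card)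
          then (1 : ℝ) else 0)
        - (if Even ((Finset.univ.filter (fun j : Fin p => j.val < s₀ ∧ x j = 1)).card)
          then (1 : ℝ) else 0)))

include hm

omit [IsProbabilityMeasure μ] hunif in
lemma m_eB (v : Fin p → Bool) :
    m (eB p v) = if Odd (cntB p s₀ v) then β else -β := by
  rw [hm]
  have hfilt : (Finset.univ.filter (fun j : Fin p => j.val < s₀ ∧ (eB p v) j = 1))
      = (Finset.univ.filter fun j : Fin p => j.val < s₀ ∧ v j = true) := by
    apply Finset.filter_congr
    intro j _
    have : (eB p v) j = 1 ↔ v j = true := by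
      rcases Bool.eq_false_or_eq_true (v j) with h | h <;> simp [eB, h]
    rw [this]
  rw [hfilt, ← cntB]
  by_cases hodd : Odd (cntB p s₀ v)
  · rw [if_pos hodd, if_pos hodd, if_neg (Nat.not_even_iff_odd.2 hodd)]
    ring
  · rw [if_neg hodd, if_neg hodd, if_pos (Nat.not_odd_iff_even.1 hodd)]
    ring

lemma WV (S : Set (Fin p → ℝ)) :
    (μ S).toReal * condVarOn μ m S
      = 4 * β^2 * (nO p s₀ S) * (nE p s₀ S) / ((nO p s₀ S : ℝ) + (nE p s₀ S)) / 2^p := by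
  have hcard : nO p s₀ S + nE p s₀ S = (FS p S).card :=
    Finset.card_filter_add_card_filter_not _
  have hμR : (μ S).toReal = ((FS p S).card : ℝ) / 2^p := by
    rw [mu_eq μ hunif S, ENNReal.toReal_mul, ENNReal.toReal_inv]
    simp [div_eq_mul_inv]
  by_cases hn : (FS p S).card = 0
  · have h0 : nO p s₀ S = 0 := by omega
    have h1 : nE p s₀ S = 0 := by omega
    rw [hμR, hn, h0, h1]
    norm_num
  · have hnpos : (0:ℝ) < (FS p S).card := by positivity
    set a : ℝ := (nO p s₀ S : ℝ) with ha
    set b : ℝ := (nE p s₀ S : ℝ) with hb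
    have hab : a + b = ((FS p S).card : ℝ) := by rw [ha, hb, ← Nat.cast_add, hcard]
    have hsum1 : ∑ v ∈ FS p S, m (eB p v) = β * a - β * b := by
      rw [← Finset.sum_filter_add_sum_filter_not (FS p S) (fun v => Odd (cntB p s₀ v))]
      rw [Finset.sum_congr rfl (fun v hv => by
          rw [m_eB hm v, if_pos (Finset.mem_filter.1 hv).2]),
        Finset.sum_congr (rfl :
            (FS p S).filter (fun v => ¬ Odd (cntB p s₀ v)) = _) (fun v hv => by
          rw [m_eB hm v, if_neg (Finset.mem_filter.1 hv).2]),
        Finset.sum_const, Finset.sum_const, nsmul_eq_mul, nsmul_eq_mul, ← nO, ← nE]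
      ring
    have hsum2 : ∀ M : ℝ, ∑ v ∈ FS p S, (m (eB p v) - M)^2
        = a * (β - M)^2 + b * (-β - M)^2 := by
      intro M
      rw [← Finset.sum_filter_add_sum_filter_not (FS p S) (fun v => Odd (cntB p s₀ v))]
      rw [Finset.sum_congr rfl (fun v hv => by
          rw [m_eB hm v, if_pos (Finset.mem_filter.1 hv).2]),
        Finset.sum_congr (rfl :
            (FS p S).filter (fun v => ¬ Odd (cntB p s₀ v)) = _) (fun v hv => by
          rw [m_eB hm v, if_neg (Finset.mem_filter.1 hv).2]),
        Finset.sum_const, Finset.sum_const, nsmul_eq_mul, nsmul_eq_mul, ← nO, ← nE]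
    have habpos : (0:ℝ) < a + b := by rw [hab]; exact hnpos
    have h2p : (0:ℝ) < 2^p := by positivity
    have hM : condMeanOn μ m S = (β * a - β * b) / (a + b) := by
      rw [condMeanOn, integral_FS μ hunif S m, hsum1, hμR, ← hab]
      rw [div_div_div_eq, mul_comm ((β*a-β*b)) ((2:ℝ)^p), mul_div_mul_left _ _ (ne_of_gt h2p)]
    have hV : condVarOn μ m S
        = (a * (β - condMeanOn μ m S)^2 + b * (-β - condMeanOn μ m S)^2) / (a + b) := by
      rw [condVarOn, integral_FS μ hunif S, hμR, ← hab]
      rw [Finset.sum_congr rfl (fun v _ => rfl), hsum2 (condMeanOn μ m S)]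
      rw [div_div_div_eq, mul_comm _ ((2:ℝ)^p), mul_div_mul_left _ _ (ne_of_gt h2p)]
    rw [hμR, ← hab, hV, hM]
    field_simp
    ring

end Measure

section Split

lemma card_lt_filter (p s₀ : ℕ) (hps : s₀ ≤ p) :
    (Finset.univ.filter fun i : Fin p => i.val < s₀).card = s₀ := by
  have himg : (Finset.univ.filter fun i : Fin p => i.val < s₀).image Fin.val
      = Finset.range s₀ := by
    ext j
    simp only [Finset.mem_image, Finset.mem_filter, Finset.mem_univ, true_and,
      Finset.mem_range]
    constructor
    · rintro ⟨i, hi, rfl⟩; exact hi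
    · intro hj; exact ⟨⟨j, lt_of_lt_of_le hj hps⟩, hj, rfl⟩
  have := congrArg Finset.card himg
  rwa [Finset.card_image_of_injective _ Fin.val_injective, Finset.card_range] at this

lemma wS_norm (p s₀ : ℕ) (hs₀ : 1 ≤ s₀) (hps : s₀ ≤ p) (z : Fin p → Bool) :
    ∑ i, (wS p s₀ z i) ^ 2 = 1 := by
  have hsq : ∀ i : Fin p, (wS p s₀ z i) ^ 2 =
      if i.val < s₀ then (1 : ℝ) / s₀ else 0 := by
    intro i
    rw [wS]
    by_cases hi : i.val < s₀
    · simp only [hi, if_true]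
      rw [div_pow, Real.sq_sqrt (by positivity)]
      rcases Bool.eq_false_or_eq_true (z i) with h | h <;> simp [h]
    · simp [hi]
  rw [Finset.sum_congr rfl (fun i _ => hsq i), Finset.sum_ite, Finset.sum_const,
    Finset.sum_const, card_lt_filter p s₀ hps]
  have hs₀' : (s₀ : ℝ) ≠ 0 := by positivity
  rw [nsmul_eq_mul, smul_zero, add_zero, mul_one_div_cancel hs₀']

lemma wS_support (p s₀ : ℕ) (hs₀ : 1 ≤ s₀) (hps : s₀ ≤ p) (z : Fin p → Bool) :
    {i | wS p s₀ z i ≠ 0}.ncard ≤ s₀ := by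
  have hset : {i | wS p s₀ z i ≠ 0} ⊆
      ↑(Finset.univ.filter fun i : Fin p => i.val < s₀) := by
    intro i hi
    simp only [Set.mem_setOf_eq, wS] at hi
    simp only [Finset.coe_filter, Set.mem_setOf_eq, Finset.mem_univ, true_and]
    by_contra h
    exact hi (by simp [h])
  calc {i | wS p s₀ z i ≠ 0}.ncard
      ≤ (↑(Finset.univ.filter fun i : Fin p => i.val < s₀) : Set (Fin p)).ncard :=
        Set.ncard_le_ncard hset (Finset.finite_toSet _)
  _ = s₀ := by rw [Set.ncard_coe_finset, card_lt_filter p s₀ hps]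

lemma split_mem (p s₀ : ℕ) (hs₀ : 1 ≤ s₀) (hps : s₀ ≤ p) (z v : Fin p → Bool) :
    (cS p s₀ z < ∑ i, wS p s₀ z i * eB p v i) ↔
      ∀ i : Fin p, i.val < s₀ → v i = z i := by
  have hsqrt : (0:ℝ) < Real.sqrt s₀ := Real.sqrt_pos.2 (by positivity)
  set σ : Fin p → ℝ := fun i => if z i then (1:ℝ) else -1 with hσ
  set ν : Fin p → ℝ := fun i => if v i then (1:ℝ) else 0 with hν
  set g : Fin p → ℝ := fun i => if z i then (1:ℝ) else 0 with hg
  set F := Finset.univ.filter fun i : Fin p => i.val < s₀ with hF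
  have hterm : ∀ i : Fin p, wS p s₀ z i * eB p v i =
      (if i.val < s₀ then σ i * ν i else 0) / Real.sqrt s₀ := by
    intro i
    rw [wS, eB]
    by_cases hi : i.val < s₀ <;>
      rcases Bool.eq_false_or_eq_true (v i) with h | h <;>
      simp [hi, h, hσ, hν, div_mul_eq_mul_div]
  have hsum : ∑ i, wS p s₀ z i * eB p v i = (∑ i ∈ F, σ i * ν i) / Real.sqrt s₀ := by
    rw [Finset.sum_congr rfl (fun i _ => hterm i), ← Finset.sum_div, hF,
      ← Finset.sum_filter]
  have hk : ((Finset.univ.filter fun i : Fin p => i.val < s₀ ∧ z i = true).card : ℝ)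
      = ∑ i ∈ F, g i := by
    rw [hF, hg]
    rw [show (Finset.univ.filter fun i : Fin p => i.val < s₀ ∧ z i = true)
        = Finset.filter (fun i => z i = true) (Finset.univ.filter fun i : Fin p => i.val < s₀)
        by rw [Finset.filter_filter]]
    rw [Finset.card_filter]
    push_cast
    apply Finset.sum_congr rfl
    intro i _
    rcases Bool.eq_false_or_eq_true (z i) with h | h <;> simp [h]
  rw [hsum, cS, div_lt_div_iff_of_pos_right hsqrt, hk]
  constructor
  · intro hlt i hi
    by_contra hne
    have hiF : i ∈ F := by simp [hF, hi]
    have hb1 : σ i * ν i ≤ g i - 1 := by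
      rcases Bool.eq_false_or_eq_true (z i) with h | h <;>
        rcases Bool.eq_false_or_eq_true (v i) with h' | h' <;>
        simp [h, h', hσ, hν, hg] at hne ⊢
    have hb2 : ∀ j, σ j * ν j ≤ g j := by
      intro j
      rcases Bool.eq_false_or_eq_true (z j) with h | h <;>
        rcases Bool.eq_false_or_eq_true (v j) with h' | h' <;>
        simp [h, h', hσ, hν, hg]
    have hT : ∑ j ∈ F, σ j * ν j ≤ (∑ j ∈ F, g j) - 1 := by
      rw [← Finset.add_sum_erase _ _ hiF, ← Finset.add_sum_erase _ (fun j => g j) hiF]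
      have := Finset.sum_le_sum (fun j (_ : j ∈ F.erase i) => hb2 j)
      linarith
    linarith
  · intro hmatch
    have : ∀ i ∈ F, σ i * ν i = g i := by
      intro i hiF
      have hi : i.val < s₀ := by simp [hF] at hiF; exact hiF
      have := hmatch i hi
      rcases Bool.eq_false_or_eq_true (z i) with h | h <;>
        simp [h, this ▸ h, hσ, hν, hg, this]
    rw [Finset.sum_congr rfl this]
    linarith

lemma FS_right (p s₀ : ℕ) (hs₀ : 1 ≤ s₀) (hps : s₀ ≤ p)
    (t : Set (Fin p → ℝ)) (z : Fin p → Bool) :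
    FS p (t ∩ {x | cS p s₀ z < ∑ i, wS p s₀ z i * x i})
      = (FS p t).filter (fun v => ∀ i : Fin p, i.val < s₀ → v i = z i) := by
  ext v
  rw [Finset.mem_filter, mem_FS, Set.mem_inter_iff, Set.mem_setOf_eq,
    split_mem p s₀ hs₀ hps z v, ← mem_FS]

lemma FS_left (p s₀ : ℕ) (hs₀ : 1 ≤ s₀) (hps : s₀ ≤ p)
    (t : Set (Fin p → ℝ)) (z : Fin p → Bool) :
    FS p (t ∩ {x | ∑ i, wS p s₀ z i * x i ≤ cS p s₀ z})
      = (FS p t).filter (fun v => ¬ ∀ i : Fin p, i.val < s₀ → v i = z i) := by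
  ext v
  rw [Finset.mem_filter, mem_FS, Set.mem_inter_iff, Set.mem_setOf_eq, ← not_lt,
    split_mem p s₀ hs₀ hps z v, ← mem_FS]

end Split

section Main

variable {p s₀ : ℕ} {μ : Measure (Fin p → ℝ)} [IsProbabilityMeasure μ] {β : ℝ}
  {m : (Fin p → ℝ) → ℝ} {t : Set (Fin p → ℝ)}

lemma branch_odd (hs₀ : 1 ≤ s₀) (hps : s₀ ≤ p)
    (hunif : ∀ v : Fin p → Bool,
      μ {(fun i => if v i then (1 : ℝ) else 0)} = ((2 : ENNReal) ^ p)⁻¹)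
    (hm : ∀ x, m x = β *
      ((if Odd ((Finset.univ.filter (fun j : Fin p => j.val < s₀ ∧ x j = 1)).card)
          then (1 : ℝ) else 0)
        - (if Even ((Finset.univ.filter (fun j : Fin p => j.val < s₀ ∧ x j = 1)).card)
          then (1 : ℝ) else 0)))
    (hminor : nO p s₀ t ≤ nE p s₀ t) (hne : nO p s₀ t ≠ 0) :
    ∃ (w : Fin p → ℝ) (c : ℝ), (∑ i, (w i) ^ 2 = 1) ∧ {i | w i ≠ 0}.ncard ≤ s₀ ∧
      (μ (t ∩ {x | c < ∑ i, w i * x i})).toReal *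
          condVarOn μ m (t ∩ {x | c < ∑ i, w i * x i})
        + (μ (t ∩ {x | ∑ i, w i * x i ≤ c})).toReal *
          condVarOn μ m (t ∩ {x | ∑ i, w i * x i ≤ c})
      ≤ (1 - (1 / 2 : ℝ) ^ s₀) * ((μ t).toReal * condVarOn μ m t) := by
  classical
  have hDne : ((FS p t).filter (fun v => Odd (cntB p s₀ v))).Nonempty :=
    Finset.card_pos.mp (Nat.pos_of_ne_zero hne)
  obtain ⟨z₀, hz₀img, hz₀max⟩ := Finset.exists_max_image
    (((FS p t).filter (fun v => Odd (cntB p s₀ v))).image (patB p s₀))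
    (fun z => (((FS p t).filter (fun v => Odd (cntB p s₀ v))).filter
      (fun v => patB p s₀ v = z)).card)
    (hDne.image _)
  obtain ⟨v₀, hv₀D, hv₀pat⟩ := Finset.mem_image.1 hz₀img
  have hz₀supp : ∀ i : Fin p, s₀ ≤ i.val → z₀ i = false := hv₀pat ▸ patB_supp p s₀ v₀
  have hz₀odd : Odd (cntB p s₀ z₀) := by
    have hcnt : cntB p s₀ v₀ = cntB p s₀ z₀ :=
      cntB_match p s₀ (fun i hi => hv₀pat ▸ patB_match p s₀ v₀ i hi)
    rw [← hcnt]
    exact (Finset.mem_filter.1 hv₀D).2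
  have himg : ((((FS p t).filter (fun v => Odd (cntB p s₀ v))).image (patB p s₀))).card
      ≤ 2 ^ (s₀ - 1) := by
    refine le_trans (Finset.card_le_card ?_) (card_parity_patterns p s₀ hs₀ hps true)
    intro z hz
    obtain ⟨v, hvD, rfl⟩ := Finset.mem_image.1 hz
    refine Finset.mem_filter.2 ⟨Finset.mem_univ _, patB_supp p s₀ v, ?_⟩
    have hcnt : cntB p s₀ (patB p s₀ v) = cntB p s₀ v :=
      (cntB_match p s₀ (patB_match p s₀ v)).symm
    rw [hcnt]
    simpa using (Finset.mem_filter.1 hvD).2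
  have hpig : nO p s₀ t ≤ 2 ^ (s₀ - 1) *
      (((FS p t).filter (fun v => Odd (cntB p s₀ v))).filter
        (fun v => patB p s₀ v = z₀)).card := by
    calc nO p s₀ t
        = ∑ z ∈ (((FS p t).filter (fun v => Odd (cntB p s₀ v))).image (patB p s₀)),
            (((FS p t).filter (fun v => Odd (cntB p s₀ v))).filter
              (fun v => patB p s₀ v = z)).card :=
          Finset.card_eq_sum_card_image _ _
    _ ≤ (((FS p t).filter (fun v => Odd (cntB p s₀ v))).image (patB p s₀)).card •
            (((FS p t).filter (fun v => Odd (cntB p s₀ v))).filter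
              (fun v => patB p s₀ v = z₀)).card :=
          Finset.sum_le_card_nsmul _ _ _ (fun z hz => hz₀max z hz)
    _ ≤ _ := by rw [smul_eq_mul]; exact Nat.mul_le_mul_right _ himg
  refine ⟨wS p s₀ z₀, cS p s₀ z₀, wS_norm p s₀ hs₀ hps z₀, wS_support p s₀ hs₀ hps z₀, ?_⟩
  have hmatch_par : ∀ v : Fin p → Bool, (∀ i : Fin p, i.val < s₀ → v i = z₀ i) →
      Odd (cntB p s₀ v) := fun v h => (cntB_match p s₀ h) ▸ hz₀odd
  have hFSR := FS_right p s₀ hs₀ hps t z₀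
  have hFSL := FS_left p s₀ hs₀ hps t z₀
  have hnER : nE p s₀ (t ∩ {x | cS p s₀ z₀ < ∑ i, wS p s₀ z₀ i * x i}) = 0 := by
    rw [nE, hFSR, Finset.filter_filter, Finset.card_eq_zero, Finset.filter_eq_empty_iff]
    intro v _ h
    exact h.2 (hmatch_par v h.1)
  have hnOR : nO p s₀ (t ∩ {x | cS p s₀ z₀ < ∑ i, wS p s₀ z₀ i * x i})
      = (((FS p t).filter (fun v => Odd (cntB p s₀ v))).filter
        (fun v => patB p s₀ v = z₀)).card := by
    rw [nO, hFSR, Finset.filter_filter, Finset.filter_filter]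
    congr 1
    apply Finset.filter_congr
    intro v _
    constructor
    · rintro ⟨h1, h2⟩; exact ⟨h2, (pat_eq_iff p s₀ hz₀supp).2 h1⟩
    · rintro ⟨h2, h1⟩; exact ⟨(pat_eq_iff p s₀ hz₀supp).1 h1, h2⟩
  have hsplitO : nO p s₀ (t ∩ {x | cS p s₀ z₀ < ∑ i, wS p s₀ z₀ i * x i})
      + nO p s₀ (t ∩ {x | ∑ i, wS p s₀ z₀ i * x i ≤ cS p s₀ z₀}) = nO p s₀ t := by
    rw [nO, nO, nO, hFSR, hFSL, Finset.filter_filter, Finset.filter_filter]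
    rw [show (FS p t).filter (fun v => (∀ i : Fin p, i.val < s₀ → v i = z₀ i)
          ∧ Odd (cntB p s₀ v))
        = ((FS p t).filter (fun v => Odd (cntB p s₀ v))).filter
            (fun v => ∀ i : Fin p, i.val < s₀ → v i = z₀ i) from by
      rw [Finset.filter_filter]; exact Finset.filter_congr (fun v _ => and_comm)]
    rw [show (FS p t).filter (fun v => (¬ ∀ i : Fin p, i.val < s₀ → v i = z₀ i)
          ∧ Odd (cntB p s₀ v))
        = ((FS p t).filter (fun v => Odd (cntB p s₀ v))).filter
            (fun v => ¬ ∀ i : Fin p, i.val < s₀ → v i = z₀ i) from by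
      rw [Finset.filter_filter]; exact Finset.filter_congr (fun v _ => and_comm)]
    exact Finset.card_filter_add_card_filter_not _
  have hsplitE : nE p s₀ (t ∩ {x | cS p s₀ z₀ < ∑ i, wS p s₀ z₀ i * x i})
      + nE p s₀ (t ∩ {x | ∑ i, wS p s₀ z₀ i * x i ≤ cS p s₀ z₀}) = nE p s₀ t := by
    rw [nE, nE, nE, hFSR, hFSL, Finset.filter_filter, Finset.filter_filter]
    rw [show (FS p t).filter (fun v => (∀ i : Fin p, i.val < s₀ → v i = z₀ i)
          ∧ ¬ Odd (cntB p s₀ v))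
        = ((FS p t).filter (fun v => ¬ Odd (cntB p s₀ v))).filter
            (fun v => ∀ i : Fin p, i.val < s₀ → v i = z₀ i) from by
      rw [Finset.filter_filter]; exact Finset.filter_congr (fun v _ => and_comm)]
    rw [show (FS p t).filter (fun v => (¬ ∀ i : Fin p, i.val < s₀ → v i = z₀ i)
          ∧ ¬ Odd (cntB p s₀ v))
        = ((FS p t).filter (fun v => ¬ Odd (cntB p s₀ v))).filter
            (fun v => ¬ ∀ i : Fin p, i.val < s₀ → v i = z₀ i) from by
      rw [Finset.filter_filter]; exact Finset.filter_congr (fun v _ => and_comm)]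
    exact Finset.card_filter_add_card_filter_not _
  rw [WV μ hunif hm, WV μ hunif hm, WV μ hunif hm, hnER, hnOR]
  have hr_le : (((FS p t).filter (fun v => Odd (cntB p s₀ v))).filter
      (fun v => patB p s₀ v = z₀)).card ≤ nO p s₀ t := Finset.card_filter_le _ _
  have haL : (nO p s₀ (t ∩ {x | ∑ i, wS p s₀ z₀ i * x i ≤ cS p s₀ z₀}) : ℝ)
      = (nO p s₀ t : ℝ) - (((FS p t).filter (fun v => Odd (cntB p s₀ v))).filter
        (fun v => patB p s₀ v = z₀)).card := by
    rw [← hsplitO, hnOR]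
    push_cast
    ring
  have hbL : (nE p s₀ (t ∩ {x | ∑ i, wS p s₀ z₀ i * x i ≤ cS p s₀ z₀}) : ℝ)
      = (nE p s₀ t : ℝ) := by
    rw [← hsplitE, hnER]
    push_cast
    ring
  rw [haL, hbL]
  have hcore := core_ineq s₀ hs₀ (nO p s₀ t : ℝ) (nE p s₀ t : ℝ)
    ((((FS p t).filter (fun v => Odd (cntB p s₀ v))).filter
      (fun v => patB p s₀ v = z₀)).card : ℝ)
    (by positivity) (by exact_mod_cast hr_le) (by exact_mod_cast hminor)
    (by exact_mod_cast hpig)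
  have hβ : (0:ℝ) ≤ β^2 / 2^p := by positivity
  have hmul := mul_le_mul_of_nonneg_left hcore hβ
  push_cast
  push_cast at hmul
  rw [mul_zero, zero_div, zero_div, zero_add]
  refine le_trans (le_of_eq (by ring)) (le_trans hmul (le_of_eq (by ring)))

lemma branch_even (hs₀ : 1 ≤ s₀) (hps : s₀ ≤ p)
    (hunif : ∀ v : Fin p → Bool,
      μ {(fun i => if v i then (1 : ℝ) else 0)} = ((2 : ENNReal) ^ p)⁻¹)
    (hm : ∀ x, m x = β *
      ((if Odd ((Finset.univ.filter (fun j : Fin p => j.val < s₀ ∧ x j = 1)).card)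
          then (1 : ℝ) else 0)
        - (if Even ((Finset.univ.filter (fun j : Fin p => j.val < s₀ ∧ x j = 1)).card)
          then (1 : ℝ) else 0)))
    (hminor : nE p s₀ t ≤ nO p s₀ t) (hne : nE p s₀ t ≠ 0) :
    ∃ (w : Fin p → ℝ) (c : ℝ), (∑ i, (w i) ^ 2 = 1) ∧ {i | w i ≠ 0}.ncard ≤ s₀ ∧
      (μ (t ∩ {x | c < ∑ i, w i * x i})).toReal *
          condVarOn μ m (t ∩ {x | c < ∑ i, w i * x i})
        + (μ (t ∩ {x | ∑ i, w i * x i ≤ c})).toReal *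
          condVarOn μ m (t ∩ {x | ∑ i, w i * x i ≤ c})
      ≤ (1 - (1 / 2 : ℝ) ^ s₀) * ((μ t).toReal * condVarOn μ m t) := by
  classical
  have hDne : ((FS p t).filter (fun v => ¬ Odd (cntB p s₀ v))).Nonempty :=
    Finset.card_pos.mp (Nat.pos_of_ne_zero hne)
  obtain ⟨z₀, hz₀img, hz₀max⟩ := Finset.exists_max_image
    (((FS p t).filter (fun v => ¬ Odd (cntB p s₀ v))).image (patB p s₀))
    (fun z => (((FS p t).filter (fun v => ¬ Odd (cntB p s₀ v))).filter
      (fun v => patB p s₀ v = z)).card)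
    (hDne.image _)
  obtain ⟨v₀, hv₀D, hv₀pat⟩ := Finset.mem_image.1 hz₀img
  have hz₀supp : ∀ i : Fin p, s₀ ≤ i.val → z₀ i = false := hv₀pat ▸ patB_supp p s₀ v₀
  have hz₀even : ¬ Odd (cntB p s₀ z₀) := by
    have hcnt : cntB p s₀ v₀ = cntB p s₀ z₀ :=
      cntB_match p s₀ (fun i hi => hv₀pat ▸ patB_match p s₀ v₀ i hi)
    rw [← hcnt]
    exact (Finset.mem_filter.1 hv₀D).2
  have himg : ((((FS p t).filter (fun v => ¬ Odd (cntB p s₀ v))).image (patB p s₀))).card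
      ≤ 2 ^ (s₀ - 1) := by
    refine le_trans (Finset.card_le_card ?_) (card_parity_patterns p s₀ hs₀ hps false)
    intro z hz
    obtain ⟨v, hvD, rfl⟩ := Finset.mem_image.1 hz
    refine Finset.mem_filter.2 ⟨Finset.mem_univ _, patB_supp p s₀ v, ?_⟩
    have hcnt : cntB p s₀ (patB p s₀ v) = cntB p s₀ v :=
      (cntB_match p s₀ (patB_match p s₀ v)).symm
    rw [hcnt]
    simpa using (Finset.mem_filter.1 hvD).2
  have hpig : nE p s₀ t ≤ 2 ^ (s₀ - 1) *
      (((FS p t).filter (fun v => ¬ Odd (cntB p s₀ v))).filter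
        (fun v => patB p s₀ v = z₀)).card := by
    calc nE p s₀ t
        = ∑ z ∈ (((FS p t).filter (fun v => ¬ Odd (cntB p s₀ v))).image (patB p s₀)),
            (((FS p t).filter (fun v => ¬ Odd (cntB p s₀ v))).filter
              (fun v => patB p s₀ v = z)).card :=
          Finset.card_eq_sum_card_image _ _
    _ ≤ (((FS p t).filter (fun v => ¬ Odd (cntB p s₀ v))).image (patB p s₀)).card •
            (((FS p t).filter (fun v => ¬ Odd (cntB p s₀ v))).filter
              (fun v => patB p s₀ v = z₀)).card :=
          Finset.sum_le_card_nsmul _ _ _ (fun z hz => hz₀max z hz)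
    _ ≤ _ := by rw [smul_eq_mul]; exact Nat.mul_le_mul_right _ himg
  refine ⟨wS p s₀ z₀, cS p s₀ z₀, wS_norm p s₀ hs₀ hps z₀, wS_support p s₀ hs₀ hps z₀, ?_⟩
  have hmatch_par : ∀ v : Fin p → Bool, (∀ i : Fin p, i.val < s₀ → v i = z₀ i) →
      ¬ Odd (cntB p s₀ v) := fun v h => (cntB_match p s₀ h) ▸ hz₀even
  have hFSR := FS_right p s₀ hs₀ hps t z₀
  have hFSL := FS_left p s₀ hs₀ hps t z₀
  have hnOR : nO p s₀ (t ∩ {x | cS p s₀ z₀ < ∑ i, wS p s₀ z₀ i * x i}) = 0 := by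
    rw [nO, hFSR, Finset.filter_filter, Finset.card_eq_zero, Finset.filter_eq_empty_iff]
    intro v _ h
    exact hmatch_par v h.1 h.2
  have hnER : nE p s₀ (t ∩ {x | cS p s₀ z₀ < ∑ i, wS p s₀ z₀ i * x i})
      = (((FS p t).filter (fun v => ¬ Odd (cntB p s₀ v))).filter
        (fun v => patB p s₀ v = z₀)).card := by
    rw [nE, hFSR, Finset.filter_filter, Finset.filter_filter]
    congr 1
    apply Finset.filter_congr
    intro v _
    constructor
    · rintro ⟨h1, h2⟩; exact ⟨h2, (pat_eq_iff p s₀ hz₀supp).2 h1⟩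
    · rintro ⟨h2, h1⟩; exact ⟨(pat_eq_iff p s₀ hz₀supp).1 h1, h2⟩
  have hsplitO : nO p s₀ (t ∩ {x | cS p s₀ z₀ < ∑ i, wS p s₀ z₀ i * x i})
      + nO p s₀ (t ∩ {x | ∑ i, wS p s₀ z₀ i * x i ≤ cS p s₀ z₀}) = nO p s₀ t := by
    rw [nO, nO, nO, hFSR, hFSL, Finset.filter_filter, Finset.filter_filter]
    rw [show (FS p t).filter (fun v => (∀ i : Fin p, i.val < s₀ → v i = z₀ i)
          ∧ Odd (cntB p s₀ v))
        = ((FS p t).filter (fun v => Odd (cntB p s₀ v))).filter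
            (fun v => ∀ i : Fin p, i.val < s₀ → v i = z₀ i) from by
      rw [Finset.filter_filter]; exact Finset.filter_congr (fun v _ => and_comm)]
    rw [show (FS p t).filter (fun v => (¬ ∀ i : Fin p, i.val < s₀ → v i = z₀ i)
          ∧ Odd (cntB p s₀ v))
        = ((FS p t).filter (fun v => Odd (cntB p s₀ v))).filter
            (fun v => ¬ ∀ i : Fin p, i.val < s₀ → v i = z₀ i) from by
      rw [Finset.filter_filter]; exact Finset.filter_congr (fun v _ => and_comm)]
    exact Finset.card_filter_add_card_filter_not _
  have hsplitE : nE p s₀ (t ∩ {x | cS p s₀ z₀ < ∑ i, wS p s₀ z₀ i * x i})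
      + nE p s₀ (t ∩ {x | ∑ i, wS p s₀ z₀ i * x i ≤ cS p s₀ z₀}) = nE p s₀ t := by
    rw [nE, nE, nE, hFSR, hFSL, Finset.filter_filter, Finset.filter_filter]
    rw [show (FS p t).filter (fun v => (∀ i : Fin p, i.val < s₀ → v i = z₀ i)
          ∧ ¬ Odd (cntB p s₀ v))
        = ((FS p t).filter (fun v => ¬ Odd (cntB p s₀ v))).filter
            (fun v => ∀ i : Fin p, i.val < s₀ → v i = z₀ i) from by
      rw [Finset.filter_filter]; exact Finset.filter_congr (fun v _ => and_comm)]
    rw [show (FS p t).filter (fun v => (¬ ∀ i : Fin p, i.val < s₀ → v i = z₀ i)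
          ∧ ¬ Odd (cntB p s₀ v))
        = ((FS p t).filter (fun v => ¬ Odd (cntB p s₀ v))).filter
            (fun v => ¬ ∀ i : Fin p, i.val < s₀ → v i = z₀ i) from by
      rw [Finset.filter_filter]; exact Finset.filter_congr (fun v _ => and_comm)]
    exact Finset.card_filter_add_card_filter_not _
  rw [WV μ hunif hm, WV μ hunif hm, WV μ hunif hm, hnOR, hnER]
  have hr_le : (((FS p t).filter (fun v => ¬ Odd (cntB p s₀ v))).filter
      (fun v => patB p s₀ v = z₀)).card ≤ nE p s₀ t := Finset.card_filter_le _ _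
  have hbL : (nE p s₀ (t ∩ {x | ∑ i, wS p s₀ z₀ i * x i ≤ cS p s₀ z₀}) : ℝ)
      = (nE p s₀ t : ℝ) - (((FS p t).filter (fun v => ¬ Odd (cntB p s₀ v))).filter
        (fun v => patB p s₀ v = z₀)).card := by
    rw [← hsplitE, hnER]
    push_cast
    ring
  have haL : (nO p s₀ (t ∩ {x | ∑ i, wS p s₀ z₀ i * x i ≤ cS p s₀ z₀}) : ℝ)
      = (nO p s₀ t : ℝ) := by
    rw [← hsplitO, hnOR]
    push_cast
    ring
  rw [haL, hbL]
  have hcore := core_ineq s₀ hs₀ (nE p s₀ t : ℝ) (nO p s₀ t : ℝ)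
    ((((FS p t).filter (fun v => ¬ Odd (cntB p s₀ v))).filter
      (fun v => patB p s₀ v = z₀)).card : ℝ)
    (by positivity) (by exact_mod_cast hr_le) (by exact_mod_cast hminor)
    (by exact_mod_cast hpig)
  have hβ : (0:ℝ) ≤ β^2 / 2^p := by positivity
  have hmul := mul_le_mul_of_nonneg_left hcore hβ
  push_cast
  push_cast at hmul
  rw [mul_zero, zero_mul, zero_div, zero_div, zero_add]
  refine le_trans (le_of_eq (by ring)) (le_trans hmul (le_of_eq (by ring)))

end Main

/-- The `s₀`-dimensional XOR function on binary features satisfies `SID(1 − 2^{−s₀}, s₀)` under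
the uniform distribution on `{0,1}^p`: for every region `t` that is an intersection of halfspaces
with positive probability, some `s₀`-sparse unit split `(w,c)` decreases the weighted within-node
variance to at most a `(1 − 2^{−s₀})` fraction. -/
theorem stmt_9 (p s₀ : ℕ) (hs₀ : 1 ≤ s₀) (hps : s₀ ≤ p)
    (μ : Measure (Fin p → ℝ)) [IsProbabilityMeasure μ]
    (hunif : ∀ v : Fin p → Bool,
      μ {(fun i => if v i then (1 : ℝ) else 0)} = ((2 : ENNReal) ^ p)⁻¹)
    (β : ℝ) (m : (Fin p → ℝ) → ℝ)
    (hm : ∀ x, m x = β *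
      ((if Odd ((Finset.univ.filter (fun j : Fin p => j.val < s₀ ∧ x j = 1)).card)
          then (1 : ℝ) else 0)
        - (if Even ((Finset.univ.filter (fun j : Fin p => j.val < s₀ ∧ x j = 1)).card)
          then (1 : ℝ) else 0)))
    (t : Set (Fin p → ℝ))
    (hreg : ∃ (l : ℕ) (w : Fin l → Fin p → ℝ) (c : Fin l → ℝ) (σ : Fin l → Bool),
      t = ⋂ j, (if σ j then {x | c j < ∑ i, w j i * x i} else {x | ∑ i, w j i * x i ≤ c j}))
    (hpos : 0 < μ t) :
    ∃ (w : Fin p → ℝ) (c : ℝ), (∑ i, (w i) ^ 2 = 1) ∧ {i | w i ≠ 0}.ncard ≤ s₀ ∧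
      (μ (t ∩ {x | c < ∑ i, w i * x i})).toReal *
          condVarOn μ m (t ∩ {x | c < ∑ i, w i * x i})
        + (μ (t ∩ {x | ∑ i, w i * x i ≤ c})).toReal *
          condVarOn μ m (t ∩ {x | ∑ i, w i * x i ≤ c})
      ≤ (1 - (1 / 2 : ℝ) ^ s₀) * ((μ t).toReal * condVarOn μ m t) := by
  classical
  by_cases hzero : nO p s₀ t = 0 ∨ nE p s₀ t = 0
  · have hWVz : ∀ S : Set (Fin p → ℝ), S ⊆ t →
        (μ S).toReal * condVarOn μ m S = 0 := by
      intro S hS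
      rw [WV μ hunif hm S]
      rcases hzero with h | h
      · have h0 : nO p s₀ S = 0 := Nat.eq_zero_of_le_zero (h ▸
          Finset.card_le_card (Finset.filter_subset_filter _ (FS_mono hS)))
        rw [h0]
        norm_num
      · have h0 : nE p s₀ S = 0 := Nat.eq_zero_of_le_zero (h ▸
          Finset.card_le_card (Finset.filter_subset_filter _ (FS_mono hS)))
        rw [h0]
        norm_num
    refine ⟨wS p s₀ (fun _ => false), cS p s₀ (fun _ => false),
      wS_norm p s₀ hs₀ hps _, wS_support p s₀ hs₀ hps _, ?_⟩
    rw [hWVz _ Set.inter_subset_left, hWVz _ Set.inter_subset_left, hWVz t subset_rfl,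
      mul_zero, add_zero]
  · push_neg at hzero
    rcases le_or_gt (nO p s₀ t) (nE p s₀ t) with hminor | hminor
    · exact branch_odd hs₀ hps hunif hm hminor hzero.1
    · exact branch_even hs₀ hps hunif hm (le_of_lt hminor) hzero.2
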